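/- Let L = B₊·W₊·B₊ᵀ − B₋·D·B₋ᵀ be the weighted Laplacian of a signed graph, where W₊ and D are diagonal with strictly positive entries, and suppose the positive subgraph is connected, i.e. the null space of B₊ᵀ is spanned by the all-ones vector. Let B₊ = [B_{T₊} B_{C₊}] be a spanning-tree decomposition of B₊ with cut-set matrix R₊ and left inverse B_{T₊}ᴸ. Then L is positive semidefinite if and only if the symmetric block matrix [[D⁻¹, B₋ᵀ·(B_{T₊}ᴸ)ᵀ],[B_{T₊}ᴸ·B₋, R₊·W₊·R₊ᵀ]] is positive semidefinite. -/

import Mathlib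

open Matrix

/-- `B` is an oriented incidence matrix: every column has exactly one `1`,
exactly one `-1`, and zeros elsewhere. -/
def IsIncidenceMatrix {V E : Type*} (B : Matrix V E ℝ) : Prop :=
  ∀ e : E, ∃ i j : V, i ≠ j ∧ B i e = 1 ∧ B j e = -1 ∧
    ∀ k : V, k ≠ i → k ≠ j → B k e = 0

/-- if the positive subgraph is connected, the signed Laplacian
`L = B₊·W₊·B₊ᵀ − B₋·D·B₋ᵀ` is positive semidefinite iff the block matrix
`[[D⁻¹, B₋ᵀ·(B_{T₊}ᴸ)ᵀ],[B_{T₊}ᴸ·B₋, R₊·W₊·R₊ᵀ]]` is. -/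
theorem signed_laplacian_psd_iff_tree_block
    {V Tp Cp Em : Type*} [Fintype V] [Fintype Tp] [Fintype Cp] [Fintype Em]
    [DecidableEq V] [DecidableEq Tp] [DecidableEq Cp] [DecidableEq Em] [Nonempty V]
    (BTp : Matrix V Tp ℝ) (BCp : Matrix V Cp ℝ) (Bm : Matrix V Em ℝ)
    (hBp : IsIncidenceMatrix (Matrix.fromCols BTp BCp))
    (hBm : IsIncidenceMatrix Bm)
    (hInd : LinearIndependent ℝ (fun f : Tp => (fun v : V => BTp v f)))
    (hSpan : ∀ c : Cp, (fun v : V => BCp v c) ∈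
      Submodule.span ℝ (Set.range (fun f : Tp => (fun v : V => BTp v f))))
    -- the positive subgraph is connected
    (hConn : LinearMap.ker (Matrix.fromCols BTp BCp)ᵀ.mulVecLin =
      Submodule.span ℝ {(fun _ : V => (1 : ℝ))})
    (wp : Tp ⊕ Cp → ℝ) (hwp : ∀ e, 0 < wp e)
    (d : Em → ℝ) (hd : ∀ e, 0 < d e) :
    (Matrix.fromCols BTp BCp * Matrix.diagonal wp * (Matrix.fromCols BTp BCp)ᵀ -
        Bm * Matrix.diagonal d * Bmᵀ).PosSemidef ↔
      (Matrix.fromBlocks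
        (Matrix.diagonal d)⁻¹
        (Bmᵀ * (((BTpᵀ * BTp)⁻¹ * BTpᵀ)ᵀ))
        ((((BTpᵀ * BTp)⁻¹ * BTpᵀ)) * Bm)
        ((Matrix.fromCols (1 : Matrix Tp Tp ℝ) ((BTpᵀ * BTp)⁻¹ * BTpᵀ * BCp)) * Matrix.diagonal wp *
          (Matrix.fromCols (1 : Matrix Tp Tp ℝ) ((BTpᵀ * BTp)⁻¹ * BTpᵀ * BCp))ᵀ)).PosSemidef := by
  classical
  set G : Matrix Tp Tp ℝ := BTpᵀ * BTp with hGdef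
  set BL : Matrix Tp V ℝ := G⁻¹ * BTpᵀ with hBLdef
  set W : Matrix (Tp ⊕ Cp) (Tp ⊕ Cp) ℝ := Matrix.diagonal wp with hWdef
  set D : Matrix Em Em ℝ := Matrix.diagonal d with hDdef
  set X : Matrix Tp Cp ℝ := BL * BCp with hXdef
  set R : Matrix Tp (Tp ⊕ Cp) ℝ := Matrix.fromCols 1 X with hRdef
  -- the Gram matrix is positive definite
  have hG : G.PosDef := by
    refine Matrix.posDef_iff_dotProduct_mulVec.mpr ⟨?_, ?_⟩
    · rw [Matrix.IsHermitian, Matrix.conjTranspose_eq_transpose_of_trivial, hGdef,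
        Matrix.transpose_mul, Matrix.transpose_transpose]
    · intro x hx
      have hBx : BTp *ᵥ x ≠ 0 := by
        intro h
        apply hx
        funext f
        refine Fintype.linearIndependent_iff.mp hInd x ?_ f
        funext v
        have := congrFun h v
        simpa [Matrix.mulVec, dotProduct, mul_comm] using this
      have key : (star x) ⬝ᵥ (G *ᵥ x) = (BTp *ᵥ x) ⬝ᵥ (BTp *ᵥ x) := by
        rw [star_trivial, hGdef, ← Matrix.mulVec_mulVec, Matrix.dotProduct_mulVec,
          Matrix.vecMul_transpose]
      rw [key]
      rcases lt_or_eq_of_le (Finset.sum_nonneg fun i _ =>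
        mul_self_nonneg ((BTp *ᵥ x) i) : (0:ℝ) ≤ (BTp *ᵥ x) ⬝ᵥ (BTp *ᵥ x)) with h | h
      · exact h
      · exact absurd (dotProduct_self_eq_zero.mp h.symm) hBx
  have hGdet : IsUnit G.det := hG.det_pos.ne'.isUnit
  have hGsym : Gᵀ = G := by rw [hGdef, Matrix.transpose_mul, Matrix.transpose_transpose]
  -- left inverse property
  have hLB : BL * BTp = 1 := by
    rw [hBLdef, Matrix.mul_assoc, ← hGdef, Matrix.nonsing_inv_mul G hGdet]
  -- BTp * X = BCp
  have hX : BTp * X = BCp := by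
    choose g hg using fun c => Submodule.mem_span_range_iff_exists_fun ℝ |>.mp (hSpan c)
    have hY : BTp * (Matrix.of fun f c => g c f) = BCp := by
      ext v c
      have := congrFun (hg c) v
      simpa [Matrix.mul_apply, Matrix.of_apply, mul_comm, Finset.sum_apply] using this
    have h1 : X = Matrix.of fun f c => g c f := by
      rw [hXdef, ← hY, ← Matrix.mul_assoc, hLB, Matrix.one_mul]
    rw [h1, hY]
  -- kernel of BTpᵀ consists of constant vectors
  have hker1 : ∀ v : V → ℝ, BTpᵀ *ᵥ v = 0 → ∃ a : ℝ, v = fun _ => a := by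
    intro v hv
    have hC : BCpᵀ *ᵥ v = 0 := by
      have hCt : BCpᵀ = Xᵀ * BTpᵀ := by rw [← Matrix.transpose_mul, hX]
      rw [hCt, ← Matrix.mulVec_mulVec, hv, Matrix.mulVec_zero]
    have hmem : v ∈ LinearMap.ker (Matrix.fromCols BTp BCp)ᵀ.mulVecLin := by
      rw [LinearMap.mem_ker, Matrix.mulVecLin_apply, Matrix.transpose_fromCols,
        Matrix.fromRows_mulVec, hv, hC]
      ext (i | i) <;> rfl
    rw [hConn] at hmem
    obtain ⟨a, ha⟩ := Submodule.mem_span_singleton.mp hmem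
    exact ⟨a, by funext i; have := congrFun ha i; simpa using this.symm⟩
  -- projection identity : BTp * (BL * Bm) = Bm
  set P : Matrix V V ℝ := BTp * BL with hPdef
  have hTP : BTpᵀ * (1 - P) = 0 := by
    have h1 : BTpᵀ * P = BTpᵀ := by
      rw [hPdef, hBLdef, ← Matrix.mul_assoc, ← hGdef, ← Matrix.mul_assoc,
        Matrix.mul_nonsing_inv G hGdet, Matrix.one_mul]
    rw [Matrix.mul_sub, Matrix.mul_one, h1, sub_self]
  have hPsymm : (1 - P)ᵀ = 1 - P := by
    rw [Matrix.transpose_sub, Matrix.transpose_one]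
    congr 1
    rw [hPdef, hBLdef, Matrix.transpose_mul, Matrix.transpose_mul,
      Matrix.transpose_transpose, Matrix.transpose_nonsing_inv, hGsym, Matrix.mul_assoc]
  have hcols : ∀ j : V, ∃ a, (fun i => (1 - P) i j) = fun _ => a := by
    intro j
    apply hker1
    funext f
    have := congrFun (congrFun hTP f) j
    simpa [Matrix.mul_apply, Matrix.mulVec, dotProduct] using this
  choose a ha using hcols
  have haconst : ∀ i j : V, a j = a i := by
    intro i j
    have h1 := congrFun (ha j) i
    have h2 := congrFun (ha i) j
    have h3 := congrFun (congrFun hPsymm i) j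
    rw [← h1, ← h2]
    rw [Matrix.transpose_apply] at h3
    exact h3.symm
  have hsum : ∀ e, ∑ k, Bm k e = 0 := by
    intro e
    obtain ⟨i, j, hij, h1, h2, h0⟩ := hBm e
    have hval : ∀ k, Bm k e = (if k = i then (1:ℝ) else 0) + (if k = j then (-1:ℝ) else 0) := by
      intro k
      by_cases hki : k = i
      · subst hki; simp [h1, hij]
      · by_cases hkj : k = j
        · subst hkj; simp [h2, hki]
        · simp [h0 k hki hkj, hki, hkj]
    rw [Finset.sum_congr rfl fun k _ => hval k]
    simp [Finset.sum_add_distrib]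
  have hQB : (1 - P) * Bm = 0 := by
    ext i e
    rw [Matrix.mul_apply, Matrix.zero_apply]
    calc ∑ k, (1 - P) i k * Bm k e = ∑ k, a i * Bm k e := by
          refine Finset.sum_congr rfl fun k _ => ?_
          rw [congrFun (ha k) i, haconst i k]
      _ = a i * ∑ k, Bm k e := by rw [Finset.mul_sum]
      _ = 0 := by rw [hsum e, mul_zero]
  have hPBm : BTp * (BL * Bm) = Bm := by
    have h1 : Bm - P * Bm = 0 := by
      rw [← Matrix.one_mul Bm, ← Matrix.mul_assoc]
      simpa [Matrix.sub_mul] using hQB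
    rw [← Matrix.mul_assoc, ← hPdef]
    rw [sub_eq_zero] at h1
    exact h1.symm
  -- relation of full and reduced incidence
  have hBpR : BTp * R = Matrix.fromCols BTp BCp := by
    rw [hRdef, Matrix.mul_fromCols, Matrix.mul_one, hX]
  have hBLBp : BL * Matrix.fromCols BTp BCp = R := by
    rw [Matrix.mul_fromCols, hLB, ← hXdef, hRdef]
  -- the two key matrices
  set L : Matrix V V ℝ :=
    Matrix.fromCols BTp BCp * W * (Matrix.fromCols BTp BCp)ᵀ - Bm * D * Bmᵀ with hLdef
  set S : Matrix Tp Tp ℝ := R * W * Rᵀ - (BL * Bm) * D * (BL * Bm)ᵀ with hSdef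
  have hfwd : L.PosSemidef → S.PosSemidef := by
    intro h
    have h2 := h.mul_mul_conjTranspose_same BL
    rw [Matrix.conjTranspose_eq_transpose_of_trivial] at h2
    convert h2 using 1
    rw [hLdef, hSdef, Matrix.mul_sub, Matrix.sub_mul]
    congr 1
    · rw [← hBLBp, Matrix.transpose_mul]
      simp only [Matrix.mul_assoc]
    · rw [Matrix.transpose_mul]
      simp only [Matrix.mul_assoc]
  have hbwd : S.PosSemidef → L.PosSemidef := by
    intro h
    have h2 := h.mul_mul_conjTranspose_same BTp
    rw [Matrix.conjTranspose_eq_transpose_of_trivial] at h2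
    convert h2 using 1
    rw [hLdef, hSdef, Matrix.mul_sub, Matrix.sub_mul]
    congr 1
    · rw [← hBpR, Matrix.transpose_mul]
      simp only [Matrix.mul_assoc]
    · conv_lhs => rw [← hPBm]
      rw [Matrix.transpose_mul]
      simp only [Matrix.mul_assoc]
  -- Schur complement step
  have hDdet : IsUnit D.det := by
    rw [hDdef, Matrix.det_diagonal]
    exact (Finset.prod_pos fun i _ => hd i).ne'.isUnit
  have hDinv : (D⁻¹).PosDef := (Matrix.posDef_diagonal_iff.mpr hd).inv
  haveI : Invertible (D⁻¹) :=
    (Matrix.isUnit_iff_isUnit_det _ |>.mpr (Matrix.isUnit_nonsing_inv_det D hDdet)).invertible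
  have hblock := Matrix.PosDef.fromBlocks₁₁ (R' := ℝ) (A := D⁻¹)
    (Bmᵀ * BLᵀ) (R * W * Rᵀ) hDinv
  have hconj : (Bmᵀ * BLᵀ)ᴴ = BL * Bm := by
    rw [Matrix.conjTranspose_eq_transpose_of_trivial, Matrix.transpose_mul,
      Matrix.transpose_transpose, Matrix.transpose_transpose]
  rw [hconj, Matrix.nonsing_inv_nonsing_inv D hDdet] at hblock
  have hschur : R * W * Rᵀ - BL * Bm * D * (Bmᵀ * BLᵀ) = S := by
    simp [hSdef, Matrix.transpose_mul]
  rw [hschur] at hblock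
  exact ⟨fun h => hblock.mpr (hfwd h), fun h => hbwd (hblock.mp h)⟩
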